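/- arXiv:2404.19757 — 2 statements merged into one kernel-verified Lean document; each statement's English description precedes it below -/
import Mathlib

section
/- If V(s), W(s) : [0,1] → U(N) are continuous paths of unitary matrices with ‖[V(s),W(s)]‖ < 2 for all s ∈ [0,1], then Bott(V(s),W(s)) = Bott(V(0),W(0)) for all s ∈ [0,1] (homotopy invariance of the Bott index). -/
open scoped Matrix
open Polynomial Matrix

/-- Spectral (operator) norm of a square complex matrix, induced by the Euclidean norm. -/
noncomputable def sNorm {N : ℕ} (A : Matrix (Fin N) (Fin N) ℂ) : ℝ :=
  ‖Matrix.toEuclideanCLM (𝕜 := ℂ) A‖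

/-- Trace of the principal logarithm, as the sum of principal logs of the eigenvalues. -/
noncomputable def trLog {N : ℕ} (W : Matrix (Fin N) (Fin N) ℂ) : ℂ :=
  ((W.charpoly.roots).map Complex.log).sum

/-- The Bott index `Bott(U,V) = (1/(2πi)) Tr log (U V U† V†)`. -/
noncomputable def bott {N : ℕ} (U V : Matrix (Fin N) (Fin N) ℂ) : ℂ :=
  (2 * Real.pi * Complex.I)⁻¹ * trLog (U * V * Uᴴ * Vᴴ)


lemma eval_charpoly_eq {N : ℕ} (M : Matrix (Fin N) (Fin N) ℂ) (z : ℂ) :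
    (M.charpoly).eval z = (Matrix.scalar (Fin N) z - M).det := by
  rw [Matrix.charpoly, eval_det, Matrix.matPolyEquiv_charmatrix]
  simp

namespace BottAux

variable {N : ℕ}

local notation "T" => Matrix.toEuclideanCLM (𝕜 := ℂ) (n := Fin N)

lemma norm_apply_le (A : Matrix (Fin N) (Fin N) ℂ) (x : EuclideanSpace ℂ (Fin N)) :
    ‖(T A) x‖ ≤ sNorm A * ‖x‖ :=
  (T A).le_opNorm x

lemma unitary_norm_apply {Q : Matrix (Fin N) (Fin N) ℂ} (hQ : Q ∈ Matrix.unitaryGroup (Fin N) ℂ)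
    (x : EuclideanSpace ℂ (Fin N)) : ‖(T Q) x‖ = ‖x‖ := by
  have hfix : (T (star Q)) ((T Q) x) = x := by
    rw [← ContinuousLinearMap.mul_apply, ← _root_.map_mul, Matrix.mem_unitaryGroup_iff'.mp hQ]
    simp
  have key : (inner ℂ ((T Q) x) ((T Q) x) : ℂ) = inner ℂ x x := by
    rw [← ContinuousLinearMap.adjoint_inner_left, ← ContinuousLinearMap.star_eq_adjoint,
      ← map_star, hfix]
  have h2 : ‖(T Q) x‖ ^ 2 = ‖x‖ ^ 2 := by
    rw [← inner_self_eq_norm_sq (𝕜 := ℂ), ← inner_self_eq_norm_sq (𝕜 := ℂ), key]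
  nlinarith [norm_nonneg ((T Q) x), norm_nonneg x]

lemma exists_eigvec {A : Matrix (Fin N) (Fin N) ℂ} {μ : ℂ} (h : μ ∈ A.charpoly.roots) :
    ∃ x : EuclideanSpace ℂ (Fin N), x ≠ 0 ∧ (T A) x = μ • x := by
  have h0 : A.charpoly.eval μ = 0 := (Polynomial.mem_roots A.charpoly_monic.ne_zero).mp h
  rw [eval_charpoly_eq] at h0
  obtain ⟨v, hv0, hv⟩ := (Matrix.exists_mulVec_eq_zero_iff).mpr h0
  have hAv : A *ᵥ v = μ • v := by
    have h1 : Matrix.scalar (Fin N) μ *ᵥ v - A *ᵥ v = 0 := by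
      rw [← Matrix.sub_mulVec]; exact hv
    have h2 : Matrix.scalar (Fin N) μ *ᵥ v = μ • v := by
      ext i
      simp [Matrix.scalar, Matrix.mulVec_diagonal, Pi.algebraMap_apply]
    rw [h2] at h1
    exact (sub_eq_zero.mp h1).symm
  refine ⟨WithLp.toLp 2 v, ?_, ?_⟩
  · simpa using hv0
  · rw [Matrix.toEuclideanCLM_toLp, hAv]
    rfl

lemma root_norm_one {Q : Matrix (Fin N) (Fin N) ℂ} (hQ : Q ∈ Matrix.unitaryGroup (Fin N) ℂ)
    {μ : ℂ} (h : μ ∈ Q.charpoly.roots) : ‖μ‖ = 1 := by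
  obtain ⟨x, hx0, hx⟩ := exists_eigvec h
  have h1 : ‖μ • x‖ = ‖x‖ := by rw [← hx, unitary_norm_apply hQ]
  rw [norm_smul] at h1
  have hxn : ‖x‖ ≠ 0 := norm_ne_zero_iff.mpr hx0
  field_simp at h1
  simpa using h1

lemma root_ne_neg_one {V W : Matrix (Fin N) (Fin N) ℂ}
    (hV : V ∈ Matrix.unitaryGroup (Fin N) ℂ) (hW : W ∈ Matrix.unitaryGroup (Fin N) ℂ)
    (hc : sNorm (V * W - W * V) < 2) {μ : ℂ}
    (h : μ ∈ (V * W * Vᴴ * Wᴴ).charpoly.roots) : μ ≠ -1 := by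
  rintro rfl
  obtain ⟨x, hx0, hx⟩ := exists_eigvec h
  rw [neg_one_smul] at hx
  set y : EuclideanSpace ℂ (Fin N) := (T (Vᴴ * Wᴴ)) x with hy
  have hstar : Vᴴ * Wᴴ = star (W * V) := by
    rw [Matrix.star_eq_conjTranspose, Matrix.conjTranspose_mul]
  have hWV : W * V ∈ Matrix.unitaryGroup (Fin N) ℂ := mul_mem hW hV
  have hyx : ‖y‖ = ‖x‖ := by
    rw [hy, hstar]
    exact unitary_norm_apply (Unitary.star_mem hWV) x
  have h1 : (T (V * W)) y = -x := by
    rw [hy, ← ContinuousLinearMap.mul_apply, ← _root_.map_mul, ← hx]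
    rw [← mul_assoc]
  have h2 : (T (W * V)) y = x := by
    rw [hy, ← ContinuousLinearMap.mul_apply, ← _root_.map_mul]
    have : W * V * (Vᴴ * Wᴴ) = 1 := by
      have hVV : V * star V = 1 := Matrix.mem_unitaryGroup_iff.mp hV
      have hWW : W * star W = 1 := Matrix.mem_unitaryGroup_iff.mp hW
      rw [Matrix.star_eq_conjTranspose] at hVV hWW
      calc W * V * (Vᴴ * Wᴴ) = W * (V * Vᴴ) * Wᴴ := by rw [mul_assoc W V, ← mul_assoc V Vᴴ Wᴴ, ← mul_assoc]
        _ = 1 := by rw [hVV, mul_one, hWW]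
    rw [this]
    simp
  have h3 : (T (V * W - W * V)) y = -x - x := by
    rw [map_sub, ContinuousLinearMap.sub_apply, h1, h2]
  have h4 : ‖(T (V * W - W * V)) y‖ = 2 * ‖x‖ := by
    rw [h3]
    have : -x - x = (-2 : ℂ) • x := by
      have : (-2 : ℂ) • x = -(x + x) := by
        rw [neg_smul, two_smul]
      rw [this]
      abel
    rw [this, norm_smul]
    simp
  have h5 := norm_apply_le (V * W - W * V) y
  rw [h4, hyx] at h5
  have hxn : 0 < ‖x‖ := norm_pos_iff.mpr hx0
  nlinarith


lemma card_roots_charpoly {N : ℕ} (M : Matrix (Fin N) (Fin N) ℂ) :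
    Multiset.card M.charpoly.roots = N := by
  rw [splits_iff_card_roots.mp (IsAlgClosed.splits M.charpoly), Matrix.charpoly_natDegree_eq_dim,
    Fintype.card_fin]

lemma ofFn_getD {α} {n : ℕ} (l : List α) (d : α) (h : l.length = n) :
    List.ofFn (fun i : Fin n => l.getD i d) = l := by
  apply List.ext_getElem (by simp [h])
  intro i h1 h2
  simp [List.getD_eq_getElem l d (by omega : i < l.length), List.getElem?_eq_getElem h2]

lemma multiset_sum_eq {m : Multiset ℂ} {n : ℕ} (h : Multiset.card m = n) (f : ℂ → ℂ) :
    (m.map f).sum = ∑ i : Fin n, f (m.toList.getD i 0) := by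
  conv_lhs => rw [← Multiset.coe_toList m]
  rw [Multiset.map_coe, Multiset.sum_coe]
  conv_lhs => rw [← ofFn_getD m.toList 0 (by rw [Multiset.length_toList, h]), List.map_ofFn,
    List.sum_ofFn]
  rfl

lemma multiset_prod_eq {m : Multiset ℂ} {n : ℕ} (h : Multiset.card m = n) (f : ℂ → ℂ) :
    (m.map f).prod = ∏ i : Fin n, f (m.toList.getD i 0) := by
  conv_lhs => rw [← Multiset.coe_toList m]
  rw [Multiset.map_coe, Multiset.prod_coe]
  conv_lhs => rw [← ofFn_getD m.toList 0 (by rw [Multiset.length_toList, h]), List.map_ofFn,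
    List.prod_ofFn]
  rfl

lemma trLog_continuousOn {N : ℕ} (U : ℝ → Matrix (Fin N) (Fin N) ℂ) (S : Set ℝ)
    (hc : ContinuousOn U S)
    (hroots : ∀ s ∈ S, ∀ μ ∈ (U s).charpoly.roots, ‖μ‖ = 1 ∧ μ ∈ Complex.slitPlane) :
    ContinuousOn (fun s => trLog (U s)) S := by
  classical
  intro s₀ hs₀
  rw [ContinuousWithinAt, Filter.tendsto_iff_seq_tendsto]
  intro u hu
  apply Filter.tendsto_of_subseq_tendsto
  intro ns hns
  set t : ℕ → ℝ := u ∘ ns with ht_def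
  have ht : Filter.Tendsto t Filter.atTop (nhdsWithin s₀ S) := hu.comp hns
  -- the root vectors
  set w : ℝ → Fin N → ℂ := fun s i => ((U s).charpoly.roots.toList.getD i 0) with hw_def
  set r : ℕ → Fin N → ℂ := fun k => if t k ∈ S then w (t k) else 0 with hr_def
  have hwmem : ∀ s ∈ S, ∀ i, w s i ∈ (U s).charpoly.roots := by
    intro s hs i
    have hlen : (U s).charpoly.roots.toList.length = N := by
      rw [Multiset.length_toList, card_roots_charpoly]
    have hi : (i : ℕ) < (U s).charpoly.roots.toList.length := by rw [hlen]; exact i.2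
    rw [hw_def]
    simp only [List.getD_eq_getElem _ _ hi]
    rw [← Multiset.mem_toList]
    exact List.getElem_mem hi
  have hrball : ∀ k, r k ∈ {v : Fin N → ℂ | ∀ i, ‖v i‖ ≤ 1} := by
    intro k
    rw [hr_def]
    by_cases h : t k ∈ S
    · simp only [if_pos h]
      intro i
      exact le_of_eq ((hroots _ h _ (hwmem _ h i)).1)
    · simp [if_neg h]
  have hcompact : IsCompact {v : Fin N → ℂ | ∀ i, ‖v i‖ ≤ 1} := by
    have : {v : Fin N → ℂ | ∀ i, ‖v i‖ ≤ 1} =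
        Set.pi Set.univ (fun _ : Fin N => Metric.closedBall (0:ℂ) 1) := by
      ext v
      simp [Set.mem_pi, mem_closedBall_zero_iff]
    rw [this]
    exact isCompact_univ_pi fun _ => ProperSpace.isCompact_closedBall _ _
  obtain ⟨v, hv, φ, hφ, hrv⟩ := hcompact.tendsto_subseq hrball
  refine ⟨φ, ?_⟩
  have htφ : Filter.Tendsto (t ∘ φ) Filter.atTop (nhdsWithin s₀ S) :=
    ht.comp hφ.tendsto_atTop
  have hev : ∀ᶠ k in Filter.atTop, t (φ k) ∈ S :=
    htφ.eventually eventually_mem_nhdsWithin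
  have hUlim : Filter.Tendsto (fun k => U (t (φ k))) Filter.atTop (nhds (U s₀)) :=
    (hc s₀ hs₀).tendsto.comp htφ
  have hrφ : ∀ i, Filter.Tendsto (fun k => r (φ k) i) Filter.atTop (nhds (v i)) := by
    intro i
    exact ((continuous_apply i).tendsto v).comp hrv
  -- evaluation identity along the sequence
  have heval : ∀ z : ℂ, Polynomial.eval z (U s₀).charpoly = ∏ i, (z - v i) := by
    intro z
    have h1 : Filter.Tendsto (fun k => Polynomial.eval z (U (t (φ k))).charpoly)
        Filter.atTop (nhds (Polynomial.eval z (U s₀).charpoly)) := by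
      simp only [eval_charpoly_eq]
      exact (((continuous_const.sub continuous_id).matrix_det).tendsto (U s₀)).comp hUlim
    have h2 : Filter.Tendsto (fun k => ∏ i, (z - r (φ k) i)) Filter.atTop
        (nhds (∏ i, (z - v i))) :=
      tendsto_finset_prod _ (fun i _ => tendsto_const_nhds.sub (hrφ i))
    have h3 : (fun k => ∏ i, (z - r (φ k) i)) =ᶠ[Filter.atTop]
        (fun k => Polynomial.eval z (U (t (φ k))).charpoly) := by
      filter_upwards [hev] with k hk
      rw [hr_def]
      simp only [if_pos hk]
      have hm := (IsAlgClosed.splits (U (t (φ k))).charpoly).eq_prod_roots_of_monic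
        (U (t (φ k))).charpoly_monic
      conv_rhs => rw [hm]
      rw [Polynomial.eval_multiset_prod, Multiset.map_map]
      have : ∀ a : ℂ, (Polynomial.eval z ∘ fun a => Polynomial.X - Polynomial.C a) a = z - a := by
        intro a; simp
      rw [Multiset.map_congr rfl (fun a _ => this a)]
      exact (multiset_prod_eq (card_roots_charpoly _) (fun a => z - a)).symm
    exact tendsto_nhds_unique h1 (Filter.Tendsto.congr' h3 h2)
  have hch : (U s₀).charpoly = ∏ i, (Polynomial.X - Polynomial.C (v i)) := by
    apply Polynomial.funext
    intro z
    rw [heval z]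
    simp [Polynomial.eval_prod]
  have hroots₀ : (U s₀).charpoly.roots = (Finset.univ.val.map v) := by
    have hmm : Finset.univ.val.map (fun i : Fin N => Polynomial.X - Polynomial.C (v i)) =
        ((Finset.univ.val.map v).map fun a => Polynomial.X - Polynomial.C a) := by
      rw [Multiset.map_map]
      rfl
    rw [hch, Finset.prod_eq_multiset_prod, hmm, Polynomial.roots_multiset_prod_X_sub_C]
  have hlog₀ : trLog (U s₀) = ∑ i, Complex.log (v i) := by
    show ((U s₀).charpoly.roots.map Complex.log).sum = _
    rw [hroots₀, Multiset.map_map]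
    rfl
  rw [hlog₀]
  have hslit : ∀ i, v i ∈ Complex.slitPlane := by
    intro i
    have : v i ∈ (U s₀).charpoly.roots := by
      rw [hroots₀]
      exact Multiset.mem_map_of_mem v (Finset.mem_univ_val i)
    exact (hroots s₀ hs₀ _ this).2
  have hfin : Filter.Tendsto (fun k => ∑ i, Complex.log (r (φ k) i)) Filter.atTop
      (nhds (∑ i, Complex.log (v i))) :=
    tendsto_finset_sum _ (fun i _ =>
      ((continuousAt_clog (hslit i)).tendsto).comp (hrφ i))
  apply hfin.congr'
  filter_upwards [hev] with k hk
  rw [hr_def]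
  simp only [if_pos hk]
  exact (multiset_sum_eq (card_roots_charpoly _) Complex.log).symm

lemma exp_multiset_log (m : Multiset ℂ) (h : ∀ z ∈ m, z ≠ 0) :
    Complex.exp ((m.map Complex.log).sum) = m.prod := by
  induction m using Multiset.induction_on with
  | empty => simp
  | cons a s ih =>
    simp only [Multiset.map_cons, Multiset.sum_cons, Multiset.prod_cons, Complex.exp_add]
    rw [Complex.exp_log (h a (Multiset.mem_cons_self a s)),
      ih (fun z hz => h z (Multiset.mem_cons_of_mem hz))]

lemma trLog_int {N : ℕ} {A : Matrix (Fin N) (Fin N) ℂ} (hdet : A.det = 1)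
    (h0 : ∀ z ∈ A.charpoly.roots, z ≠ 0) :
    ∃ n : ℤ, trLog A = n * (2 * Real.pi * Complex.I) := by
  have h1 : Complex.exp (trLog A) = 1 := by
    rw [trLog, exp_multiset_log _ h0, ← Matrix.det_eq_prod_roots_charpoly, hdet]
  rw [Complex.exp_eq_one_iff] at h1
  obtain ⟨n, hn⟩ := h1
  exact ⟨n, hn⟩

lemma int_const {f : ℝ → ℝ} (hf : ContinuousOn f (Set.Icc 0 1))
    (hint : ∀ s ∈ Set.Icc (0:ℝ) 1, ∃ n : ℤ, f s = n) :
    ∀ s ∈ Set.Icc (0:ℝ) 1, f s = f 0 := by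
  intro s hs
  by_contra hne
  have h0 : (0:ℝ) ∈ Set.Icc (0:ℝ) 1 := Set.left_mem_Icc.mpr zero_le_one
  obtain ⟨m, hm⟩ := hint 0 h0
  obtain ⟨n, hn⟩ := hint s hs
  have hfs : ContinuousOn f (Set.Icc 0 s) := hf.mono (Set.Icc_subset_Icc le_rfl hs.2)
  have hmn : m ≠ n := by
    rintro rfl
    exact hne (hn.trans hm.symm)
  have hsub : Set.Icc (0:ℝ) s ⊆ Set.Icc 0 1 := Set.Icc_subset_Icc le_rfl hs.2
  rcases lt_or_gt_of_ne hmn with hlt | hlt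
  · have hy : (m:ℝ) + 1/2 ∈ Set.Icc (f 0) (f s) := by
      constructor
      · rw [hm]; linarith
      · rw [hn]
        have : (m:ℝ) + 1 ≤ n := by exact_mod_cast hlt
        linarith
    obtain ⟨c, hc, hfc⟩ := intermediate_value_Icc hs.1 hfs hy
    obtain ⟨k, hk⟩ := hint c (hsub hc)
    rw [hk] at hfc
    have : (2*k : ℝ) = 2*m + 1 := by linarith
    have : (2*k : ℤ) = 2*m + 1 := by exact_mod_cast this
    omega
  · have hy : (n:ℝ) + 1/2 ∈ Set.Icc (f s) (f 0) := by
      constructor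
      · rw [hn]; linarith
      · rw [hm]
        have : (n:ℝ) + 1 ≤ m := by exact_mod_cast hlt
        linarith
    obtain ⟨c, hc, hfc⟩ := intermediate_value_Icc' hs.1 hfs hy
    obtain ⟨k, hk⟩ := hint c (hsub hc)
    rw [hk] at hfc
    have : (2*k : ℝ) = 2*n + 1 := by linarith
    have : (2*k : ℤ) = 2*n + 1 := by exact_mod_cast this
    omega

end BottAux

/-- Homotopy invariance of the Bott index: along continuous paths of unitaries with
`‖[V(s),W(s)]‖ < 2` for all `s ∈ [0,1]`, the Bott index is constant. -/
theorem stmt_4 {N : ℕ} (V W : ℝ → Matrix (Fin N) (Fin N) ℂ)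
    (hVcont : ContinuousOn V (Set.Icc 0 1)) (hWcont : ContinuousOn W (Set.Icc 0 1))
    (hVu : ∀ s ∈ Set.Icc (0:ℝ) 1, V s ∈ Matrix.unitaryGroup (Fin N) ℂ)
    (hWu : ∀ s ∈ Set.Icc (0:ℝ) 1, W s ∈ Matrix.unitaryGroup (Fin N) ℂ)
    (hcomm : ∀ s ∈ Set.Icc (0:ℝ) 1, sNorm (V s * W s - W s * V s) < 2) :
    ∀ s ∈ Set.Icc (0:ℝ) 1, bott (V s) (W s) = bott (V 0) (W 0) := by
  classical
  open BottAux in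
  set U : ℝ → Matrix (Fin N) (Fin N) ℂ := fun s => V s * W s * (V s)ᴴ * (W s)ᴴ with hU_def
  have hUu : ∀ s ∈ Set.Icc (0:ℝ) 1, U s ∈ Matrix.unitaryGroup (Fin N) ℂ := by
    intro s hs
    have h1 := hVu s hs
    have h2 := hWu s hs
    exact mul_mem (mul_mem (mul_mem h1 h2)
      (by rw [← Matrix.star_eq_conjTranspose]; exact Unitary.star_mem h1))
      (by rw [← Matrix.star_eq_conjTranspose]; exact Unitary.star_mem h2)
  have hroots : ∀ s ∈ Set.Icc (0:ℝ) 1, ∀ μ ∈ (U s).charpoly.roots,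
      ‖μ‖ = 1 ∧ μ ∈ Complex.slitPlane := by
    intro s hs μ hμ
    have hn1 : ‖μ‖ = 1 := BottAux.root_norm_one (hUu s hs) hμ
    have hne : μ ≠ -1 := BottAux.root_ne_neg_one (hVu s hs) (hWu s hs) (hcomm s hs) hμ
    refine ⟨hn1, ?_⟩
    rw [Complex.mem_slitPlane_iff]
    by_cases him : μ.im = 0
    · left
      have hre : (μ.re : ℂ) = μ := Complex.ext rfl (by simp [him])
      have habs : |μ.re| = 1 := by
        have : ‖(μ.re : ℂ)‖ = |μ.re| := by simp
        rw [← this, hre, hn1]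
      rcases (abs_eq (by norm_num : (0:ℝ) ≤ 1)).mp habs with h | h
      · rw [h]; norm_num
      · exfalso
        apply hne
        rw [← hre, h]
        push_cast
        ring
    · right; exact him
  have hUcont : ContinuousOn U (Set.Icc 0 1) := by
    have h1 : ContinuousOn (fun s => (V s)ᴴ) (Set.Icc (0:ℝ) 1) :=
      (continuous_id.matrix_conjTranspose).comp_continuousOn hVcont
    have h2 : ContinuousOn (fun s => (W s)ᴴ) (Set.Icc (0:ℝ) 1) :=
      (continuous_id.matrix_conjTranspose).comp_continuousOn hWcont
    exact ((hVcont.mul hWcont).mul h1).mul h2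
  have hcont := BottAux.trLog_continuousOn U _ hUcont hroots
  have hint : ∀ s ∈ Set.Icc (0:ℝ) 1, ∃ n : ℤ,
      trLog (U s) = n * (2 * Real.pi * Complex.I) := by
    intro s hs
    apply BottAux.trLog_int
    · have h1 := (Unitary.mem_iff.mp (Matrix.det_of_mem_unitary (hVu s hs))).2
      have h2 := (Unitary.mem_iff.mp (Matrix.det_of_mem_unitary (hWu s hs))).2
      show (V s * W s * (V s)ᴴ * (W s)ᴴ).det = 1
      simp only [Matrix.det_mul, Matrix.det_conjTranspose]
      calc (V s).det * (W s).det * star (V s).det * star (W s).det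
          = ((V s).det * star (V s).det) * ((W s).det * star (W s).det) := by ring
        _ = 1 := by rw [h1, h2, one_mul]
    · intro z hz h0
      have hz1 := (hroots s hs z hz).1
      rw [h0] at hz1
      simp at hz1
  set f : ℝ → ℝ := fun s => ((2 * Real.pi * Complex.I)⁻¹ * trLog (U s)).re with hf_def
  have hfc : ContinuousOn f (Set.Icc 0 1) :=
    Complex.continuous_re.comp_continuousOn (continuousOn_const.mul hcont)
  have h2πI : (2 * (Real.pi:ℂ) * Complex.I) ≠ 0 := by
    simp [Complex.I_ne_zero, Real.pi_ne_zero, Complex.ofReal_ne_zero]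
  have hbottv : ∀ s, ∀ n : ℤ, trLog (U s) = n * (2 * Real.pi * Complex.I) →
      (2 * Real.pi * Complex.I)⁻¹ * trLog (U s) = n := by
    intro s n hn
    rw [hn]
    field_simp
  have hfint : ∀ s ∈ Set.Icc (0:ℝ) 1, ∃ n : ℤ, f s = n := by
    intro s hs
    obtain ⟨n, hn⟩ := hint s hs
    refine ⟨n, ?_⟩
    show ((2 * Real.pi * Complex.I)⁻¹ * trLog (U s)).re = n
    rw [hbottv s n hn]
    simp
  intro s hs
  have h0mem : (0:ℝ) ∈ Set.Icc (0:ℝ) 1 := Set.left_mem_Icc.mpr zero_le_one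
  obtain ⟨n, hn⟩ := hint s hs
  obtain ⟨m, hm⟩ := hint 0 h0mem
  have hb1 : bott (V s) (W s) = (n : ℂ) := hbottv s n hn
  have hb0 : bott (V 0) (W 0) = (m : ℂ) := hbottv 0 m hm
  have hfs : f s = (n : ℝ) := by
    show ((2 * Real.pi * Complex.I)⁻¹ * trLog (U s)).re = (n:ℝ)
    rw [hbottv s n hn]; simp
  have hf0 : f 0 = (m : ℝ) := by
    show ((2 * Real.pi * Complex.I)⁻¹ * trLog (U 0)).re = (m:ℝ)
    rw [hbottv 0 m hm]; simp
  have heq := BottAux.int_const hfc hfint s hs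
  rw [hfs, hf0] at heq
  have : n = m := by exact_mod_cast heq
  rw [hb1, hb0, this]
end

section
/- Let A and B be Hermitian matrices. If Bott(e^{iA}, e^{iB}) ≠ 0 (and the Bott index is well-defined, i.e. ‖[e^{iA}, e^{iB}]‖ < 2), then there exists s₀ ∈ [0,1] such that ‖[e^{iAs₀}, e^{iB}]‖ = 2. -/
open scoped Matrix

open scoped Matrix
open NormedSpace

set_option maxHeartbeats 1000000

noncomputable def emb {N : ℕ} :
    Matrix (Fin N) (Fin N) ℂ ≃⋆ₐ[ℂ] (EuclideanSpace ℂ (Fin N) →L[ℂ] EuclideanSpace ℂ (Fin N)) :=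
  Matrix.toEuclideanCLM (𝕜 := ℂ)

theorem emb_cont {N : ℕ} : Continuous (emb (N := N)) :=
  LinearMap.continuous_of_finiteDimensional
    ({ toFun := emb, map_add' := map_add emb, map_smul' := map_smul emb } :
      Matrix (Fin N) (Fin N) ℂ →ₗ[ℂ] _)

theorem emb_symm_cont {N : ℕ} : Continuous (emb (N := N)).symm :=
  LinearMap.continuous_of_finiteDimensional
    ({ toFun := emb.symm, map_add' := map_add emb.symm, map_smul' := map_smul emb.symm } :
      _ →ₗ[ℂ] Matrix (Fin N) (Fin N) ℂ)

theorem emb_exp {N : ℕ} (M : Matrix (Fin N) (Fin N) ℂ) : emb (NormedSpace.exp M) = NormedSpace.exp (emb M) := by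
  letI : SeminormedRing (Matrix (Fin N) (Fin N) ℂ) := Matrix.linftyOpSemiNormedRing
  letI : NormedRing (Matrix (Fin N) (Fin N) ℂ) := Matrix.linftyOpNormedRing
  letI : NormedAlgebra ℂ (Matrix (Fin N) (Fin N) ℂ) := Matrix.linftyOpNormedAlgebra
  letI : NormedAlgebra ℚ (Matrix (Fin N) (Fin N) ℂ) := NormedAlgebra.restrictScalars ℚ ℂ _
  letI : NormedAlgebra ℚ (EuclideanSpace ℂ (Fin N) →L[ℂ] EuclideanSpace ℂ (Fin N)) :=
    NormedAlgebra.restrictScalars ℚ ℂ _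
  exact map_exp emb emb_cont M

theorem isUnit_emb {N : ℕ} (M : Matrix (Fin N) (Fin N) ℂ) : IsUnit (emb M) ↔ IsUnit M := by
  constructor
  · intro h
    have := h.map (emb (N := N)).symm.toRingEquiv.toRingHom
    simpa using this
  · intro h
    exact h.map (emb (N := N)).toRingEquiv.toRingHom

theorem spec_emb {N : ℕ} (M : Matrix (Fin N) (Fin N) ℂ) (μ : ℂ) :
    μ ∈ spectrum ℂ (emb M) ↔ ¬ IsUnit (μ • (1 : Matrix (Fin N) (Fin N) ℂ) - M) := by
  rw [spectrum.mem_iff, Algebra.algebraMap_eq_smul_one]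
  constructor
  · intro h hU
    exact h (by simpa [map_sub, map_smul, map_one] using (isUnit_emb (μ • 1 - M)).mpr hU)
  · intro h hU
    exact h ((isUnit_emb (μ • 1 - M)).mp (by simpa [map_sub, map_smul, map_one] using hU))

theorem eval_charpoly' {N : ℕ} (M : Matrix (Fin N) (Fin N) ℂ) (x : ℂ) :
    M.charpoly.eval x = (x • (1 : Matrix (Fin N) (Fin N) ℂ) - M).det := by
  rw [Matrix.charpoly, ← Polynomial.coe_evalRingHom, RingHom.map_det]
  congr 1
  ext i j
  by_cases h : i = j
  · subst h
    simp [Matrix.charmatrix_apply_eq, Matrix.one_apply]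
  · simp [Matrix.charmatrix_apply_ne _ _ _ h, Matrix.one_apply_ne h]
open Complex

theorem aux_discrete {c : ℝ} (hc : 0 < c) {s : Set ℝ} (hs : IsPreconnected s)
    (h : ∀ x ∈ s, ∃ n : ℤ, x = n * c) : s.Subsingleton := by
  intro a ha b hb
  by_contra hne
  wlog hab : a < b generalizing a b
  · exact this hb ha (Ne.symm hne) (lt_of_le_of_ne (not_lt.mp hab) (Ne.symm hne))
  obtain ⟨k, hk⟩ := h a ha
  obtain ⟨l, hl⟩ := h b hb
  have hkl : (k : ℝ) < l := by
    have := hab; rw [hk, hl] at this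
    exact_mod_cast (mul_lt_mul_iff_of_pos_right hc).mp this
  have hkl' : (k : ℝ) + 1 ≤ l := by exact_mod_cast Int.add_one_le_iff.mpr (by exact_mod_cast hkl)
  set x := k * c + c / 2 with hx
  have hax : a < x := by rw [hk, hx]; linarith
  have hxb : x < b := by rw [hl, hx]; nlinarith
  have hxs : x ∈ s := by
    have := hs.ordConnected.out ha hb
    exact this ⟨le_of_lt hax, le_of_lt hxb⟩
  obtain ⟨j, hj⟩ := h x hxs
  have : (j : ℝ) = k + 1 / 2 := by
    have : (j : ℝ) * c = (k + 1/2) * c := by rw [← hj, hx]; ring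
    exact mul_right_cancel₀ (ne_of_gt hc) this
  have h1 : ((j - k : ℤ) : ℝ) = 1 / 2 := by push_cast; linarith
  have h2 : (0 : ℝ) < ((j - k : ℤ) : ℝ) := by rw [h1]; norm_num
  have h3 : (1 : ℝ) ≤ ((j - k : ℤ) : ℝ) := by exact_mod_cast (by exact_mod_cast h2 : (0:ℤ) < j - k)
  rw [h1] at h3; linarith

theorem aux_lift_unique {f g : ℝ → ℂ} (hf : ContinuousOn f (Set.Icc 0 1))
    (hg : ContinuousOn g (Set.Icc 0 1))
    (hfg : ∀ t ∈ Set.Icc (0:ℝ) 1, Complex.exp (f t) = Complex.exp (g t))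
    (h0 : f 0 = g 0) : f 1 = g 1 := by
  have hmem : ∀ t ∈ Set.Icc (0:ℝ) 1, ∃ n : ℤ, f t - g t = n * (2 * Real.pi * I) := by
    intro t ht
    have : Complex.exp (f t - g t) = 1 := by
      rw [Complex.exp_sub, hfg t ht, div_self (Complex.exp_ne_zero _)]
    exact Complex.exp_eq_one_iff.mp this
  set h : ℝ → ℝ := fun t => (f t - g t).im with hh
  have hhc : ContinuousOn h (Set.Icc 0 1) :=
    Complex.continuous_im.comp_continuousOn (hf.sub hg)
  have him : ∀ t ∈ Set.Icc (0:ℝ) 1, ∃ n : ℤ, h t = n * (2 * Real.pi) := by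
    intro t ht
    obtain ⟨n, hn⟩ := hmem t ht
    refine ⟨n, ?_⟩
    rw [hh]; simp only [hn]
    simp [Complex.mul_im, Complex.mul_re]
  have hsub : (h '' Set.Icc 0 1).Subsingleton := by
    refine aux_discrete (c := 2 * Real.pi) (by linarith [Real.two_pi_pos]) (isPreconnected_Icc.image h hhc) ?_
    rintro x ⟨t, ht, rfl⟩
    exact him t ht
  have h10 : h 1 = h 0 :=
    hsub (Set.mem_image_of_mem h (by norm_num)) (Set.mem_image_of_mem h (by norm_num))
  have h00 : h 0 = 0 := by rw [hh]; simp [h0]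
  have hre : (f 1 - g 1).re = 0 := by
    obtain ⟨n, hn⟩ := hmem 1 (by norm_num)
    rw [hn]; simp [Complex.mul_re]
  have him1 : (f 1 - g 1).im = 0 := by
    have : h 1 = 0 := by rw [h10, h00]
    simpa [hh] using this
  have : f 1 - g 1 = 0 := Complex.ext hre him1
  exact sub_eq_zero.mp this

theorem multiset_exp_sum (s : Multiset ℂ) : Complex.exp s.sum = (s.map Complex.exp).prod := by
  induction s using Multiset.induction_on with
  | empty => simp
  | cons a s ih => simp [Complex.exp_add, ih]

theorem multiset_sum_continuousOn {S : Multiset ℂ} {F : ℂ → ℝ → ℂ} {K : Set ℝ}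
    (h : ∀ μ ∈ S, ContinuousOn (F μ) K) :
    ContinuousOn (fun t => (S.map (fun μ => F μ t)).sum) K := by
  induction S using Multiset.induction_on with
  | empty => simpa using continuousOn_const
  | cons a s ih =>
    simp only [Multiset.map_cons, Multiset.sum_cons]
    exact (h a (Multiset.mem_cons_self a s)).add (ih fun μ hμ => h μ (Multiset.mem_cons_of_mem hμ))

theorem mem_slitPlane_of_near_one {z : ℂ} (h : ‖z - 1‖ < 1) : z ∈ Complex.slitPlane := by
  rw [Complex.mem_slitPlane_iff]
  left
  have := Complex.abs_re_le_norm (z - 1)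
  have h2 : |z.re - 1| < 1 := by
    simpa using lt_of_le_of_lt this h
  have := abs_lt.mp h2
  linarith

theorem seg_mem_slitPlane {μ : ℂ} (hnorm : ‖μ‖ = 1) (hne : μ ≠ -1) {t : ℝ}
    (ht : t ∈ Set.Icc (0:ℝ) 1) : (1 - (t:ℂ)) + t * μ ∈ Complex.slitPlane := by
  rw [Complex.mem_slitPlane_iff]
  by_cases him : μ.im = 0
  · have hμ : μ = (μ.re : ℂ) := Complex.ext rfl (by simp [him])
    have habs : |μ.re| = 1 := by
      rw [hμ] at hnorm; simpa using hnorm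
    rcases abs_eq (by norm_num : (0:ℝ) ≤ 1) |>.mp habs with h1 | h1
    · left
      rw [hμ, h1]
      simp only [Complex.ofReal_one, mul_one, Complex.add_re, Complex.sub_re, Complex.one_re,
        Complex.ofReal_re]
      norm_num
    · exfalso; apply hne; rw [hμ, h1]; norm_num
  · rcases eq_or_lt_of_le ht.1 with h0 | h0
    · left
      simp only [← h0, Complex.ofReal_zero, sub_zero, zero_mul, add_zero, Complex.one_re]
      norm_num
    · right
      simp only [Complex.add_im, Complex.sub_im, Complex.mul_im, Complex.ofReal_im,
        Complex.ofReal_re, Complex.one_im]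
      intro hc
      apply him
      have : t * μ.im = 0 := by linarith
      rcases mul_eq_zero.mp this with h | h
      · exact absurd h (ne_of_gt h0)
      · exact h

section UnitaryExp
open Matrix
variable {N : ℕ}

theorem exp_unitary_pair {M : Matrix (Fin N) (Fin N) ℂ} (hM : M.IsHermitian) (z : ℂ)
    (hz : z.re = 0) :
    NormedSpace.exp (z • M) * (NormedSpace.exp (z • M))ᴴ = 1 ∧ (NormedSpace.exp (z • M))ᴴ * NormedSpace.exp (z • M) = 1 := by
  have hstar : (z • M)ᴴ = -(z • M) := by
    rw [conjTranspose_smul, hM.eq]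
    rw [← neg_smul]
    congr 1
    have : (starRingEnd ℂ) z = -z := by
      apply Complex.ext <;> simp [hz]
    simpa using this
  have hconj : (NormedSpace.exp (z • M))ᴴ = NormedSpace.exp (-(z • M)) := by
    rw [← Matrix.exp_conjTranspose, hstar]
  constructor
  · rw [hconj, ← Matrix.exp_add_of_commute (z • M) (-(z • M)) (Commute.neg_right (Commute.refl _)),
      add_neg_cancel, NormedSpace.exp_zero]
  · rw [hconj, ← Matrix.exp_add_of_commute (-(z • M)) (z • M) (Commute.neg_left (Commute.refl _)),
      neg_add_cancel, NormedSpace.exp_zero]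

end UnitaryExp

section DetProd
open Matrix Polynomial
variable {N : ℕ}

theorem det_affine_eq_prod_roots (M : Matrix (Fin N) (Fin N) ℂ) (t : ℂ) :
    ((1 - t) • (1 : Matrix (Fin N) (Fin N) ℂ) + t • M).det
      = (M.charpoly.roots.map (fun μ => (1 - t) + t * μ)).prod := by
  by_cases ht : t = 0
  · subst ht
    simp [Matrix.det_one]
  · set c : ℂ := (t - 1) / t with hc
    have hct : (-t) * c = 1 - t := by
      rw [hc, neg_mul, ← mul_div_assoc, mul_div_cancel_left₀ _ ht]; ring
    have hmat : (1 - t) • (1 : Matrix (Fin N) (Fin N) ℂ) + t • M = (-t) • (c • 1 - M) := by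
      rw [smul_sub, smul_smul, hct, sub_eq_add_neg, neg_smul]
      abel
    have hsplit : M.charpoly.Splits := IsAlgClosed.splits M.charpoly
    have hprod : M.charpoly = (M.charpoly.roots.map (fun a => X - C a)).prod :=
      hsplit.eq_prod_roots_of_monic (Matrix.charpoly_monic M)
    have hcard : M.charpoly.roots.card = N := by
      haveI : Nontrivial ℂ := inferInstance
      rw [Polynomial.splits_iff_card_roots.mp hsplit, Matrix.charpoly_natDegree_eq_dim]
      simp
    have heval : M.charpoly.eval c = (M.charpoly.roots.map (fun a => c - a)).prod := by
      conv_lhs => rw [hprod]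
      rw [Polynomial.eval_multiset_prod, Multiset.map_map]
      exact congrArg _ (Multiset.map_congr rfl (fun a _ => by simp))
    rw [hmat, Matrix.det_smul, ← eval_charpoly', heval]
    have : (M.charpoly.roots.map fun μ => 1 - t + t * μ)
        = M.charpoly.roots.map (fun a => (-t) * (c - a)) := by
      refine Multiset.map_congr rfl (fun a _ => ?_)
      rw [mul_sub, hct]
      ring
    rw [this]
    have : (M.charpoly.roots.map (fun a => (-t) * (c - a))).prod
        = (M.charpoly.roots.map (fun _ => (-t : ℂ))).prod
          * (M.charpoly.roots.map (fun a => c - a)).prod := Multiset.prod_map_mul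
    rw [this, Multiset.map_const', Multiset.prod_replicate, hcard]
    simp

end DetProd

/-- If `A`, `B` are Hermitian, the Bott index of `e^{iA}` and `e^{iB}` is well defined
(`‖[e^{iA},e^{iB}]‖ < 2`) and nonzero, then there is `s₀ ∈ [0,1]` with
`‖[e^{iAs₀}, e^{iB}]‖ = 2`. -/
theorem stmt_5 {N : ℕ} (A B : Matrix (Fin N) (Fin N) ℂ)
    (hA : A.IsHermitian) (hB : B.IsHermitian)
    (hwd : sNorm (NormedSpace.exp (Complex.I • A) * NormedSpace.exp (Complex.I • B)
      - NormedSpace.exp (Complex.I • B) * NormedSpace.exp (Complex.I • A)) < 2)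
    (hnz : bott (NormedSpace.exp (Complex.I • A)) (NormedSpace.exp (Complex.I • B)) ≠ 0) :
    ∃ s₀ ∈ Set.Icc (0:ℝ) 1,
      sNorm (NormedSpace.exp ((Complex.I * s₀) • A) * NormedSpace.exp (Complex.I • B)
        - NormedSpace.exp (Complex.I • B) * NormedSpace.exp ((Complex.I * s₀) • A)) = 2 := by
  classical
  by_cases hN0 : N = 0
  · exfalso
    apply hnz
    subst hN0
    have hcp : (NormedSpace.exp (Complex.I • A) * NormedSpace.exp (Complex.I • B) *
        (NormedSpace.exp (Complex.I • A))ᴴ * (NormedSpace.exp (Complex.I • B))ᴴ).charpoly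
          = 1 := by
      unfold Matrix.charpoly
      exact Matrix.det_isEmpty
    rw [bott, trLog, hcp]
    simp
  have hN : 0 < N := Nat.pos_of_ne_zero hN0
  haveI : Nonempty (Fin N) := ⟨⟨0, hN⟩⟩
  haveI : Nontrivial (EuclideanSpace ℂ (Fin N)) := by infer_instance
  by_contra hcon
  push_neg at hcon
  set K : Set ℝ := Set.Icc (0:ℝ) 1 with hK
  set Um : ℝ → Matrix (Fin N) (Fin N) ℂ :=
    fun s => NormedSpace.exp ((Complex.I * s) • A) with hUm
  set Vm : Matrix (Fin N) (Fin N) ℂ := NormedSpace.exp (Complex.I • B) with hVm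
  set Wm : ℝ → Matrix (Fin N) (Fin N) ℂ := fun s => Um s * Vm * (Um s)ᴴ * Vmᴴ with hWm
  have hUuni : ∀ s : ℝ, Um s * (Um s)ᴴ = 1 ∧ (Um s)ᴴ * Um s = 1 := fun s =>
    exp_unitary_pair hA (Complex.I * s) (by simp)
  have hVuni : Vm * Vmᴴ = 1 ∧ Vmᴴ * Vm = 1 :=
    exp_unitary_pair hB Complex.I (by simp)
  set u : ℝ → (EuclideanSpace ℂ (Fin N) →L[ℂ] EuclideanSpace ℂ (Fin N)) :=
    fun s => emb (Um s) with hu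
  set v : (EuclideanSpace ℂ (Fin N) →L[ℂ] EuclideanSpace ℂ (Fin N)) := emb Vm with hv
  set w : ℝ → (EuclideanSpace ℂ (Fin N) →L[ℂ] EuclideanSpace ℂ (Fin N)) :=
    fun s => emb (Wm s) with hw
  have hwdef : ∀ s, w s = u s * v * star (u s) * star v := by
    intro s
    simp only [hw, hWm, hu, hv, map_mul, ← Matrix.star_eq_conjTranspose, map_star]
  have humem : ∀ s, u s ∈ unitary _ := by
    intro s
    rw [Unitary.mem_iff]
    constructor
    · have := congrArg emb (hUuni s).2
      simpa only [map_mul, map_one, ← Matrix.star_eq_conjTranspose, map_star] using this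
    · have := congrArg emb (hUuni s).1
      simpa only [map_mul, map_one, ← Matrix.star_eq_conjTranspose, map_star] using this
  have hvmem : v ∈ unitary _ := by
    rw [Unitary.mem_iff]
    constructor
    · have := congrArg emb hVuni.2
      simpa only [map_mul, map_one, ← Matrix.star_eq_conjTranspose, map_star] using this
    · have := congrArg emb hVuni.1
      simpa only [map_mul, map_one, ← Matrix.star_eq_conjTranspose, map_star] using this
  have hwmem : ∀ s, w s ∈ unitary _ := by
    intro s
    rw [hwdef s]
    exact mul_mem (mul_mem (mul_mem (humem s) hvmem) (Unitary.star_mem (humem s)))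
      (Unitary.star_mem hvmem)
  have hnu : ∀ s, ‖u s‖ = 1 := fun s => CStarRing.norm_coe_unitary ⟨u s, humem s⟩
  have hnv : ‖v‖ = 1 := CStarRing.norm_coe_unitary ⟨v, hvmem⟩
  have hsNorm : ∀ s : ℝ, sNorm (Um s * Vm - Vm * Um s) = ‖u s * v - v * u s‖ := by
    intro s
    show ‖emb (Um s * Vm - Vm * Um s)‖ = _
    rw [map_sub, map_mul, map_mul]
  have hlt : ∀ s ∈ K, ‖u s * v - v * u s‖ < 2 := by
    intro s hs
    have hle : ‖u s * v - v * u s‖ ≤ 2 := by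
      calc ‖u s * v - v * u s‖ ≤ ‖u s * v‖ + ‖v * u s‖ := norm_sub_le _ _
        _ ≤ ‖u s‖ * ‖v‖ + ‖v‖ * ‖u s‖ := add_le_add (norm_mul_le _ _) (norm_mul_le _ _)
        _ = 2 := by rw [hnu s, hnv]; norm_num
    refine lt_of_le_of_ne hle ?_
    rw [← hsNorm s]
    exact hcon s hs
  have hwlt : ∀ s ∈ K, ‖w s - 1‖ < 2 := by
    intro s hs
    have h1 : u s * star (u s) = 1 := (Unitary.mem_iff.mp (humem s)).2
    have h2 : v * star v = 1 := (Unitary.mem_iff.mp hvmem).2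
    have hkey : (v * u s) * (star (u s) * star v) = 1 := by
      rw [mul_assoc, ← mul_assoc (u s), h1, one_mul, h2]
    have hwid : w s - 1 = (u s * v - v * u s) * (star (u s) * star v) := by
      rw [sub_mul, hkey, hwdef s, mul_assoc (u s * v)]
    rw [hwid]
    calc ‖(u s * v - v * u s) * (star (u s) * star v)‖
        ≤ ‖u s * v - v * u s‖ * ‖star (u s) * star v‖ := norm_mul_le _ _
      _ ≤ ‖u s * v - v * u s‖ * 1 := by
          refine mul_le_mul_of_nonneg_left ?_ (norm_nonneg _)
          calc ‖star (u s) * star v‖ ≤ ‖star (u s)‖ * ‖star v‖ := norm_mul_le _ _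
            _ = 1 := by
                rw [CStarRing.norm_coe_unitary ⟨star (u s), Unitary.star_mem (humem s)⟩,
                  CStarRing.norm_coe_unitary ⟨star v, Unitary.star_mem hvmem⟩, one_mul]
      _ < 2 := by rw [mul_one]; exact hlt s hs
  have hspecne : ∀ s ∈ K, (-1 : ℂ) ∉ spectrum ℂ (w s) := by
    intro s hs hmem
    have e : (algebraMap ℂ _ (-2 : ℂ)) - (w s - 1) = (algebraMap ℂ _ (-1 : ℂ)) - w s := by
      rw [Algebra.algebraMap_eq_smul_one, Algebra.algebraMap_eq_smul_one]
      module
    have h2 : ((-2 : ℂ)) ∈ spectrum ℂ (w s - 1) := by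
      rw [spectrum.mem_iff, e]
      exact spectrum.mem_iff.mp hmem
    have hle2 := spectrum.norm_le_norm_of_mem h2
    have : ‖(-2 : ℂ)‖ = 2 := by simp
    rw [this] at hle2
    exact absurd (lt_of_le_of_lt hle2 (hwlt s hs)) (lt_irrefl _)
  -- roots of charpoly lie on the circle minus -1
  have hroots : ∀ s ∈ K, ∀ μ ∈ (Wm s).charpoly.roots, ‖μ‖ = 1 ∧ μ ≠ -1 := by
    intro s hs μ hμ
    have hev : (Wm s).charpoly.eval μ = 0 := (Polynomial.mem_roots'.mp hμ).2
    have hdet0 : (μ • (1 : Matrix (Fin N) (Fin N) ℂ) - Wm s).det = 0 := by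
      rw [← eval_charpoly']; exact hev
    have hnunit : ¬ IsUnit (μ • (1 : Matrix (Fin N) (Fin N) ℂ) - Wm s) := by
      rw [Matrix.isUnit_iff_isUnit_det, hdet0]
      simp
    have hspec : μ ∈ spectrum ℂ (w s) := (spec_emb _ μ).mpr hnunit
    refine ⟨?_, ?_⟩
    · have := spectrum.subset_circle_of_unitary (hwmem s) hspec
      rwa [mem_sphere_zero_iff_norm] at this
    · rintro rfl
      exact hspecne s hs hspec
  set F : ℝ → ℝ → ℂ :=
    fun t s => ((1 - (t:ℂ)) • (1 : Matrix (Fin N) (Fin N) ℂ) + (t:ℂ) • Wm s).det with hF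
  have hFprod : ∀ t s : ℝ, F t s
      = ((Wm s).charpoly.roots.map (fun μ => (1 - (t:ℂ)) + t * μ)).prod := fun t s =>
    det_affine_eq_prod_roots (Wm s) t
  have hFne : ∀ t ∈ K, ∀ s ∈ K, F t s ≠ 0 := by
    intro t ht s hs h0
    rw [hFprod] at h0
    have h0' := Multiset.prod_eq_zero_iff.mp h0
    obtain ⟨μ, hμ, hμ0⟩ := Multiset.mem_map.mp h0'
    obtain ⟨h1, h2⟩ := hroots s hs μ hμ
    exact Complex.slitPlane_ne_zero (seg_mem_slitPlane h1 h2 ht) hμ0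
  -- continuity of F
  have hUmc : Continuous Um := by
    have h1 : Continuous fun s : ℝ => ((Complex.I * s) • emb A) :=
      (continuous_const.mul Complex.continuous_ofReal).smul continuous_const
    letI : NormedAlgebra ℚ (EuclideanSpace ℂ (Fin N) →L[ℂ] EuclideanSpace ℂ (Fin N)) :=
      NormedAlgebra.restrictScalars ℚ ℂ _
    have h2 : Continuous fun s : ℝ => NormedSpace.exp ((Complex.I * s) • emb A) :=
      NormedSpace.exp_continuous.comp h1
    have h3 : Um = fun s : ℝ => emb.symm (NormedSpace.exp ((Complex.I * (s:ℂ)) • emb A)) := by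
      funext s
      have : emb (Um s) = NormedSpace.exp ((Complex.I * s) • emb A) := by
        rw [hUm, emb_exp, map_smul]
      rw [← this, StarAlgEquiv.symm_apply_apply]
    rw [h3]
    exact emb_symm_cont.comp h2
  have hWmc : Continuous Wm :=
    ((hUmc.matrix_mul continuous_const).matrix_mul hUmc.matrix_conjTranspose).matrix_mul
      continuous_const
  have hFC : Continuous (fun p : ℝ × ℝ => F p.1 p.2) := by
    apply Continuous.matrix_det
    exact ((continuous_const.sub (Complex.continuous_ofReal.comp continuous_fst)).smul
      continuous_const).add
      ((Complex.continuous_ofReal.comp continuous_fst).smul (hWmc.comp continuous_snd))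
  -- endpoint values of F
  have hdetW : ∀ s : ℝ, (Wm s).det = 1 := by
    intro s
    have h1 : (Um s).det * ((Um s)ᴴ).det = 1 := by
      rw [← Matrix.det_mul, (hUuni s).1, Matrix.det_one]
    have h2 : Vm.det * (Vmᴴ).det = 1 := by
      rw [← Matrix.det_mul, hVuni.1, Matrix.det_one]
    have : (Wm s).det = ((Um s).det * ((Um s)ᴴ).det) * (Vm.det * (Vmᴴ).det) := by
      simp only [hWm, Matrix.det_mul]; ring
    rw [this, h1, h2, one_mul]
  have hF0 : ∀ s : ℝ, F 0 s = 1 := by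
    intro s
    simp only [hF, Complex.ofReal_zero, sub_zero, one_smul, zero_smul, add_zero, Matrix.det_one]
  have hF1 : ∀ s : ℝ, F 1 s = 1 := by
    intro s
    simp only [hF, Complex.ofReal_one, sub_self, zero_smul, one_smul, zero_add]
    exact hdetW s
  have hWm0 : Wm 0 = 1 := by
    have hU0 : Um 0 = 1 := by
      rw [hUm]
      simp only [Complex.ofReal_zero, mul_zero, zero_smul]
      exact NormedSpace.exp_zero
    simp only [hWm, hU0, Matrix.conjTranspose_one, one_mul, mul_one]
    exact hVuni.1
  have hFt0 : ∀ t : ℝ, F t 0 = 1 := by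
    intro t
    have : (1 - (t:ℂ)) • (1 : Matrix (Fin N) (Fin N) ℂ) + (t:ℂ) • (1 : Matrix (Fin N) (Fin N) ℂ)
        = 1 := by
      rw [← add_smul]
      ring_nf
      exact one_smul _ _
    simp only [hF, hWm0, this, Matrix.det_one]
  -- compactness, minimum, uniform continuity
  set K2 : Set (ℝ × ℝ) := K ×ˢ K with hK2
  have hK2c : IsCompact K2 := (isCompact_Icc).prod (isCompact_Icc)
  have hK2ne : K2.Nonempty := ⟨(0,0), ⟨⟨le_refl 0, zero_le_one⟩, ⟨le_refl 0, zero_le_one⟩⟩⟩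
  obtain ⟨p0, hp0, hmin⟩ := hK2c.exists_isMinOn hK2ne
    ((continuous_norm.comp hFC).continuousOn)
  set m : ℝ := ‖F p0.1 p0.2‖ with hm
  have hmpos : 0 < m := by
    rw [hm, norm_pos_iff]
    exact hFne p0.1 hp0.1 p0.2 hp0.2
  have hmle : ∀ p ∈ K2, m ≤ ‖F p.1 p.2‖ := fun p hp => hmin hp
  have hUC := hK2c.uniformContinuousOn_of_continuous hFC.continuousOn
  rw [Metric.uniformContinuousOn_iff] at hUC
  obtain ⟨δ, hδpos, hδ⟩ := hUC m hmpos
  obtain ⟨n, hn⟩ := exists_nat_one_div_lt hδpos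
  set sp : ℕ → ℝ := fun k => k / (n+1) with hsp
  have hsp_mem : ∀ k, k ≤ n+1 → sp k ∈ K := by
    intro k hk
    constructor
    · positivity
    · rw [hsp]
      rw [div_le_one (by positivity)]
      exact_mod_cast hk
  have hsp0 : sp 0 = 0 := by simp [hsp]
  have hsp1 : sp (n+1) = 1 := by
    rw [hsp]
    push_cast
    rw [div_self]
    positivity
  have hratio : ∀ t ∈ K, ∀ k ≤ n, ‖F t (sp (k+1)) - F t (sp k)‖ < m := by
    intro t ht k hk
    have h1 : (t, sp (k+1)) ∈ K2 := ⟨ht, hsp_mem (k+1) (by omega)⟩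
    have h2 : (t, sp k) ∈ K2 := ⟨ht, hsp_mem k (by omega)⟩
    have hd : dist (t, sp (k+1)) (t, sp k) < δ := by
      rw [Prod.dist_eq]
      have : dist (sp (k+1)) (sp k) = 1 / (n+1) := by
        rw [Real.dist_eq, hsp]
        push_cast
        rw [div_sub_div_same]
        have hnn : (0:ℝ) ≤ ((k:ℝ) + 1 - (k:ℝ)) / ((n:ℝ) + 1) := by
          have : ((k:ℝ) + 1 - (k:ℝ)) = 1 := by ring
          rw [this]; positivity
        rw [_root_.abs_of_nonneg hnn]
        ring_nf
      rw [this]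
      simp only [dist_self]
      rw [max_eq_right (by positivity)]
      exact hn
    have := hδ _ h1 _ h2 hd
    rwa [dist_eq_norm] at this
  have hFkne : ∀ t ∈ K, ∀ k, k ≤ n+1 → F t (sp k) ≠ 0 := fun t ht k hk =>
    hFne t ht (sp k) (hsp_mem k hk)
  set r : ℕ → ℝ → ℂ := fun k t => F t (sp (k+1)) / F t (sp k) with hr
  have hrnear : ∀ t ∈ K, ∀ k ≤ n, ‖r k t - 1‖ < 1 := by
    intro t ht k hk
    have hne := hFkne t ht k (by omega)
    rw [hr]
    simp only
    rw [div_sub_one hne, norm_div, div_lt_one (norm_pos_iff.mpr hne)]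
    exact lt_of_lt_of_le (hratio t ht k hk) (hmle (t, sp k) ⟨ht, hsp_mem k (by omega)⟩)
  set L : ℝ → ℂ := fun t => ∑ k ∈ Finset.range (n+1), Complex.log (r k t) with hL
  have hLlift : ∀ t ∈ K, ∀ j, j ≤ n+1 →
      Complex.exp (∑ k ∈ Finset.range j, Complex.log (r k t)) = F t (sp j) := by
    intro t ht j
    induction j with
    | zero =>
      intro _
      rw [Finset.range_zero, Finset.sum_empty, Complex.exp_zero, hsp0, hFt0]
    | succ j ih =>
      intro hj
      rw [Finset.sum_range_succ, Complex.exp_add, ih (by omega), Complex.exp_log ?hne]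
      case hne =>
        rw [hr]
        exact div_ne_zero (hFkne t ht (j+1) hj) (hFkne t ht j (by omega))
      rw [hr]
      simp only
      rw [mul_comm, div_mul_cancel₀ _ (hFkne t ht j (by omega))]
  have hL0 : L 0 = 0 := by
    rw [hL]
    simp only
    refine Finset.sum_eq_zero fun k hk => ?_
    rw [hr]
    simp only
    rw [hF0, hF0, div_one, Complex.log_one]
  have hL1 : L 1 = 0 := by
    rw [hL]
    simp only
    refine Finset.sum_eq_zero fun k hk => ?_
    rw [hr]
    simp only
    rw [hF1, hF1, div_one, Complex.log_one]
  have hLcont : ContinuousOn L K := by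
    rw [hL]
    apply continuousOn_finset_sum
    intro k hk
    have hk' : k ≤ n := by
      have := Finset.mem_range.mp hk; omega
    have hc1 : ContinuousOn (fun t => F t (sp (k+1))) K :=
      (hFC.comp (continuous_id.prodMk continuous_const)).continuousOn
    have hc2 : ContinuousOn (fun t => F t (sp k)) K :=
      (hFC.comp (continuous_id.prodMk continuous_const)).continuousOn
    have hrc : ContinuousOn (r k) K := hc1.div hc2 (fun t ht => hFkne t ht k (by omega))
    exact hrc.clog fun t ht => mem_slitPlane_of_near_one (hrnear t ht k hk')
  set R : Multiset ℂ := (Wm 1).charpoly.roots with hR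
  have h1K : (1:ℝ) ∈ K := ⟨zero_le_one, le_refl 1⟩
  have hRprops : ∀ μ ∈ R, ‖μ‖ = 1 ∧ μ ≠ -1 := hroots 1 h1K
  set l : ℝ → ℂ := fun t => (R.map (fun μ => Complex.log ((1 - (t:ℂ)) + t * μ))).sum with hl
  have hllift : ∀ t ∈ K, Complex.exp (l t) = F t 1 := by
    intro t ht
    rw [hl]
    simp only
    rw [multiset_exp_sum, Multiset.map_map, hFprod t 1]
    congr 1
    refine Multiset.map_congr rfl fun μ hμ => ?_
    simp only [Function.comp_apply]
    exact Complex.exp_log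
      (Complex.slitPlane_ne_zero (seg_mem_slitPlane (hRprops μ hμ).1 (hRprops μ hμ).2 ht))
  have hl0 : l 0 = 0 := by
    rw [hl]
    simp only
    have : R.map (fun μ => Complex.log ((1 - ((0:ℝ):ℂ)) + (0:ℝ) * μ))
        = R.map (fun _ => (0:ℂ)) := by
      refine Multiset.map_congr rfl fun μ _ => ?_
      simp
    rw [this, Multiset.map_const', Multiset.sum_replicate, smul_zero]
  have hl1 : l 1 = trLog (Wm 1) := by
    rw [hl, trLog]
    simp only
    congr 1
    refine Multiset.map_congr rfl fun μ _ => ?_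
    simp
  have hlcont : ContinuousOn l K := by
    rw [hl]
    apply multiset_sum_continuousOn
    intro μ hμ
    refine ContinuousOn.clog ?_ fun t ht => seg_mem_slitPlane (hRprops μ hμ).1 (hRprops μ hμ).2 ht
    exact ((continuous_const.sub Complex.continuous_ofReal).add
      (Complex.continuous_ofReal.mul continuous_const)).continuousOn
  have hfin : l 1 = L 1 := by
    refine aux_lift_unique hlcont hLcont ?_ ?_
    · intro t ht
      rw [hllift t ht, hL]
      simp only
      rw [hLlift t ht (n+1) le_rfl, hsp1]
    · rw [hl0, hL0]
  have htr : trLog (Wm 1) = 0 := by rw [← hl1, hfin, hL1]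
  apply hnz
  have harg : NormedSpace.exp (Complex.I • A) * NormedSpace.exp (Complex.I • B) *
      (NormedSpace.exp (Complex.I • A))ᴴ * (NormedSpace.exp (Complex.I • B))ᴴ = Wm 1 := by
    simp only [hWm, hUm, hVm, Complex.ofReal_one, mul_one]
  rw [bott, harg, htr, mul_zero]
end
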